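/- Let x ∈ ℝ³ with ‖x‖ = x₁²+x₂²+x₃² ≤ 1, and let ρ̃ = (1/4)·(I₄ + (3/5)·Σᵢ xᵢ(σᵢ⊗I₂ + I₂⊗σᵢ) + (1/5)·Σⱼ σⱼ⊗σⱼ). Then the partial transpose ρ̃^{T₂} is positive semidefinite (equivalently, ρ̃ is separable) if and only if ‖x‖ ≤ 8/9 and ‖x‖ − x₃² ≤ (4/3)(1 + x₃). -/

import Mathlib

open Matrix Kronecker
open scoped ComplexOrder

/-- The three Pauli matrices. -/
noncomputable def pauli : Fin 3 → Matrix (Fin 2) (Fin 2) ℂ :=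
  ![!![0, 1; 1, 0], !![0, -Complex.I; Complex.I, 0], !![1, 0; 0, -1]]

/-- Partial transpose on the second qubit:
`(ρ^{T₂})_{(i,μ),(j,ν)} = ρ_{(i,ν),(j,μ)}`. -/
noncomputable def ptranspose (ρ : Matrix (Fin 2 × Fin 2) (Fin 2 × Fin 2) ℂ) :
    Matrix (Fin 2 × Fin 2) (Fin 2 × Fin 2) ℂ :=
  Matrix.of fun p q => ρ (p.1, q.2) (q.1, p.2)

/-- 20 times the partially transposed residual matrix, written explicitly. -/
noncomputable def P20 (a b c : ℝ) : Matrix (Fin 4) (Fin 4) ℂ :=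
  !![6+6*c, 3*(a+b*Complex.I), 3*(a-b*Complex.I), 2;
     3*(a-b*Complex.I), 4, 0, 3*(a-b*Complex.I);
     3*(a+b*Complex.I), 0, 4, 3*(a+b*Complex.I);
     2, 3*(a+b*Complex.I), 3*(a-b*Complex.I), 6-6*c]

def eq4 : Fin 2 × Fin 2 ≃ Fin 4 where
  toFun p := ![![0,1],![2,3]] p.1 p.2
  invFun := ![(0,0),(0,1),(1,0),(1,1)]
  left_inv := by decide
  right_inv := by decide

theorem my_det_fin_four {R : Type*} [CommRing R] (A : Matrix (Fin 4) (Fin 4) R) :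
    det A =
      A 0 0 * (A 1 1 * A 2 2 * A 3 3 - A 1 1 * A 2 3 * A 3 2 - A 1 2 * A 2 1 * A 3 3
        + A 1 2 * A 2 3 * A 3 1 + A 1 3 * A 2 1 * A 3 2 - A 1 3 * A 2 2 * A 3 1)
      - A 0 1 * (A 1 0 * A 2 2 * A 3 3 - A 1 0 * A 2 3 * A 3 2 - A 1 2 * A 2 0 * A 3 3
        + A 1 2 * A 2 3 * A 3 0 + A 1 3 * A 2 0 * A 3 2 - A 1 3 * A 2 2 * A 3 0)
      + A 0 2 * (A 1 0 * A 2 1 * A 3 3 - A 1 0 * A 2 3 * A 3 1 - A 1 1 * A 2 0 * A 3 3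
        + A 1 1 * A 2 3 * A 3 0 + A 1 3 * A 2 0 * A 3 1 - A 1 3 * A 2 1 * A 3 0)
      - A 0 3 * (A 1 0 * A 2 1 * A 3 2 - A 1 0 * A 2 2 * A 3 1 - A 1 1 * A 2 0 * A 3 2
        + A 1 1 * A 2 2 * A 3 0 + A 1 2 * A 2 0 * A 3 1 - A 1 2 * A 2 1 * A 3 0) := by
  rw [Matrix.det_succ_row_zero, Fin.sum_univ_four]
  simp (config := { decide := true }) [Matrix.det_fin_three, Matrix.submatrix_apply, Fin.succAbove,
    show (Fin.succ 2 : Fin 4) = 3 from rfl, show (Fin.succ 1 : Fin 4) = 2 from rfl,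
    show (Fin.succ 0 : Fin 4) = 1 from rfl, show (Fin.castSucc 2 : Fin 4) = 2 from rfl]
  ring

set_option maxHeartbeats 1000000 in
theorem detP20 (a b c : ℝ) : det (P20 a b c) = ((512 - 576*(a^2+b^2+c^2) : ℝ) : ℂ) := by
  rw [my_det_fin_four]
  simp only [P20, Matrix.cons_val', Matrix.cons_val_zero, Matrix.cons_val_one, Matrix.head_cons,
    Matrix.empty_val', Matrix.cons_val_fin_one, Matrix.head_fin_const, Matrix.cons_val_two,
    Matrix.cons_val_three, Matrix.tail_cons]
  push_cast
  apply Complex.ext <;> simp [← Complex.ofReal_pow] <;> ring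

lemma psd_det_nonneg {n : Type*} [Fintype n] [DecidableEq n] {M : Matrix n n ℂ}
    (h : M.PosSemidef) : 0 ≤ M.det := by
  rw [h.isHermitian.det_eq_prod_eigenvalues, ← RCLike.ofReal_prod]
  exact RCLike.ofReal_nonneg.mpr (Finset.prod_nonneg fun i _ => h.eigenvalues_nonneg i)

lemma zero_le_real_mul {r : ℝ} (hr : 0 < r) (z : ℂ) : 0 ≤ (r:ℂ) * z ↔ 0 ≤ z := by
  rw [Complex.le_def, Complex.le_def]
  simp only [Complex.zero_re, Complex.zero_im, Complex.mul_re, Complex.mul_im,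
    Complex.ofReal_re, Complex.ofReal_im, zero_mul, mul_zero, sub_zero, add_zero, zero_add]
  constructor
  · rintro ⟨h1, h2⟩
    refine ⟨by nlinarith, ?_⟩
    rcases mul_eq_zero.mp h2.symm with h | h
    · exact absurd h hr.ne'
    · exact h.symm
  · rintro ⟨h1, h2⟩
    exact ⟨mul_nonneg hr.le h1, by rw [← h2, mul_zero]⟩

lemma smul_psd {n : Type*} [Fintype n] (M : Matrix n n ℂ) {r : ℝ} (hr : 0 < r)
    (h : M.PosSemidef) : ((r:ℂ) • M).PosSemidef := by
  refine Matrix.PosSemidef.of_dotProduct_mulVec_nonneg ?_ ?_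
  · have h1 := h.isHermitian
    rw [Matrix.IsHermitian, Matrix.conjTranspose_smul, h1, Complex.star_def,
      Complex.conj_ofReal]
  · intro v
    rw [Matrix.smul_mulVec, dotProduct_smul, smul_eq_mul,
      zero_le_real_mul hr]
    exact h.dotProduct_mulVec_nonneg v

lemma smul_psd_iff {n : Type*} [Fintype n] (M : Matrix n n ℂ) {r : ℝ} (hr : 0 < r) :
    ((r:ℂ) • M).PosSemidef ↔ M.PosSemidef := by
  refine ⟨fun h => ?_, smul_psd M hr⟩
  have := smul_psd _ (inv_pos.mpr hr) h
  rwa [smul_smul, ← Complex.ofReal_mul, inv_mul_cancel₀ hr.ne', Complex.ofReal_one,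
    one_smul] at this

lemma hermP20 (a b c : ℝ) : (P20 a b c).IsHermitian := by
  rw [Matrix.IsHermitian]
  ext i j
  fin_cases i <;> fin_cases j <;>
    simp [P20, Matrix.conjTranspose_apply, Complex.ext_iff]

set_option maxHeartbeats 1000000 in
lemma key (a b c p1 q1 p2 q2 p3 q3 p4 q4 : ℝ)
    (hA : a^2+b^2+c^2 ≤ 8/9) (hB : a^2+b^2 ≤ 4/3*(1+c)) :
    0 ≤ (6+6*c)*(p1^2+q1^2) + 4*(p2^2+q2^2+p3^2+q3^2) + (6-6*c)*(p4^2+q4^2)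
      + 6*(p1*(a*p2-b*q2+a*p3+b*q3) + q1*(a*q2+b*p2+a*q3-b*p3))
      + 4*(p1*p4+q1*q4)
      + 6*(p4*(a*p2-b*q2+a*p3+b*q3) + q4*(a*q2+b*p2+a*q3-b*p3)) := by
  have ht0 : 0 ≤ a^2+b^2 := by positivity
  have hA1 : 0 ≤ 6+6*c - (9/2)*(a^2+b^2) := by linarith
  have hA2 : 0 ≤ 6-6*c - (9/2)*(a^2+b^2) := by nlinarith [sq_nonneg (c - 2/3)]
  have hdet : 0 ≤ 32 - 36*(a^2+b^2+c^2) := by linarith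
  by_cases h0 : a^2+b^2 = 0
  · have ha : a = 0 := by nlinarith [sq_nonneg a, sq_nonneg b]
    have hb : b = 0 := by nlinarith [sq_nonneg a, sq_nonneg b]
    subst ha hb
    have hc : c^2 ≤ 8/9 := by nlinarith
    have h6 : 0 < 6+6*c := by nlinarith
    nlinarith [sq_nonneg ((6+6*c)*p1+2*p4), sq_nonneg ((6+6*c)*q1+2*q4),
      mul_nonneg (mul_nonneg h6.le h6.le) (sq_nonneg p4),
      mul_nonneg (mul_nonneg h6.le h6.le) (sq_nonneg q4),
      mul_nonneg h6.le (add_nonneg (add_nonneg (sq_nonneg p2) (sq_nonneg q2))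
        (add_nonneg (sq_nonneg p3) (sq_nonneg q3))),
      mul_nonneg (mul_nonneg h6.le (by nlinarith : (0:ℝ) ≤ 32 - 36*c^2)) (sq_nonneg p4),
      mul_nonneg (mul_nonneg h6.le (by nlinarith : (0:ℝ) ≤ 32 - 36*c^2)) (sq_nonneg q4)]
  · have htpos : 0 < a^2+b^2 := lt_of_le_of_ne ht0 (Ne.symm h0)
    set Q := (6+6*c)*(p1^2+q1^2) + 4*(p2^2+q2^2+p3^2+q3^2) + (6-6*c)*(p4^2+q4^2)
      + 6*(p1*(a*p2-b*q2+a*p3+b*q3) + q1*(a*q2+b*p2+a*q3-b*p3))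
      + 4*(p1*p4+q1*q4)
      + 6*(p4*(a*p2-b*q2+a*p3+b*q3) + q4*(a*q2+b*p2+a*q3-b*p3)) with hQ
    by_cases hA1p : 0 < 6+6*c - (9/2)*(a^2+b^2)
    · have hrhs : 0 ≤ (6+6*c - (9/2)*(a^2+b^2)) * ((a^2+b^2) * Q) := by
        have hid : (6+6*c - (9/2)*(a^2+b^2)) * ((a^2+b^2) * Q) =
          2*(6+6*c - (9/2)*(a^2+b^2))*((a*p2-b*q2-a*p3-b*q3)^2+(a*q2+b*p2-a*q3+b*p3)^2)
          + 2*(6+6*c - (9/2)*(a^2+b^2))*(((a*p2-b*q2+a*p3+b*q3)+(3/2)*(a^2+b^2)*(p1+p4))^2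
              +((a*q2+b*p2+a*q3-b*p3)+(3/2)*(a^2+b^2)*(q1+q4))^2)
          + (a^2+b^2)*((((6+6*c - (9/2)*(a^2+b^2))*p1+(2-(9/2)*(a^2+b^2))*p4)^2
              + ((6+6*c - (9/2)*(a^2+b^2))*q1+(2-(9/2)*(a^2+b^2))*q4)^2)
              + (32-36*(a^2+b^2+c^2))*(p4^2+q4^2)) := by
          rw [hQ]; ring
        rw [hid]
        exact add_nonneg (add_nonneg
          (mul_nonneg (mul_nonneg (by norm_num : (0:ℝ) ≤ 2) hA1)
            (add_nonneg (sq_nonneg _) (sq_nonneg _)))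
          (mul_nonneg (mul_nonneg (by norm_num : (0:ℝ) ≤ 2) hA1)
            (add_nonneg (sq_nonneg _) (sq_nonneg _))))
          (mul_nonneg ht0 (add_nonneg (add_nonneg (sq_nonneg _) (sq_nonneg _))
            (mul_nonneg hdet (add_nonneg (sq_nonneg _) (sq_nonneg _)))))
      clear hQ; clear_value Q
      nlinarith [mul_pos hA1p htpos, hrhs]
    · have hA2p : 0 < 6-6*c - (9/2)*(a^2+b^2) := by nlinarith [sq_nonneg c]
      have hrhs : 0 ≤ (6-6*c - (9/2)*(a^2+b^2)) * ((a^2+b^2) * Q) := by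
        have hid : (6-6*c - (9/2)*(a^2+b^2)) * ((a^2+b^2) * Q) =
          2*(6-6*c - (9/2)*(a^2+b^2))*((a*p2-b*q2-a*p3-b*q3)^2+(a*q2+b*p2-a*q3+b*p3)^2)
          + 2*(6-6*c - (9/2)*(a^2+b^2))*(((a*p2-b*q2+a*p3+b*q3)+(3/2)*(a^2+b^2)*(p1+p4))^2
              +((a*q2+b*p2+a*q3-b*p3)+(3/2)*(a^2+b^2)*(q1+q4))^2)
          + (a^2+b^2)*((((6-6*c - (9/2)*(a^2+b^2))*p4+(2-(9/2)*(a^2+b^2))*p1)^2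
              + ((6-6*c - (9/2)*(a^2+b^2))*q4+(2-(9/2)*(a^2+b^2))*q1)^2)
              + (32-36*(a^2+b^2+c^2))*(p1^2+q1^2)) := by
          rw [hQ]; ring
        rw [hid]
        exact add_nonneg (add_nonneg
          (mul_nonneg (mul_nonneg (by norm_num : (0:ℝ) ≤ 2) hA2)
            (add_nonneg (sq_nonneg _) (sq_nonneg _)))
          (mul_nonneg (mul_nonneg (by norm_num : (0:ℝ) ≤ 2) hA2)
            (add_nonneg (sq_nonneg _) (sq_nonneg _))))
          (mul_nonneg ht0 (add_nonneg (add_nonneg (sq_nonneg _) (sq_nonneg _))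
            (mul_nonneg hdet (add_nonneg (sq_nonneg _) (sq_nonneg _)))))
      clear hQ; clear_value Q
      nlinarith [mul_pos hA2p htpos, hrhs]

set_option maxHeartbeats 2000000 in
lemma matrix_eq (x : Fin 3 → ℝ) :
    ptranspose ((1/4 : ℂ) • ((1 : Matrix (Fin 2 × Fin 2) (Fin 2 × Fin 2) ℂ)
        + (3/5 : ℂ) • ∑ i : Fin 3, (x i : ℂ) • (pauli i ⊗ₖ 1 + 1 ⊗ₖ pauli i)
        + (1/5 : ℂ) • ∑ j : Fin 3, pauli j ⊗ₖ pauli j))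
    = ((20:ℂ)⁻¹ • P20 (x 0) (x 1) (x 2)).submatrix eq4 eq4 := by
  ext ⟨i, μ⟩ ⟨j, ν⟩
  fin_cases i <;> fin_cases j <;> fin_cases μ <;> fin_cases ν <;>
    simp only [ptranspose, Matrix.of_apply, Matrix.smul_apply, Matrix.add_apply,
      Matrix.one_apply, Fin.sum_univ_three, Matrix.kroneckerMap_apply,
      Matrix.submatrix_apply, smul_eq_mul, pauli, P20, eq4, Equiv.coe_fn_mk,
      Matrix.cons_val_zero, Matrix.cons_val_one, Matrix.head_cons,
      Matrix.head_fin_const, Matrix.empty_val', Matrix.cons_val_fin_one,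
      Prod.mk.injEq, Matrix.cons_val, Fin.zero_eta, Fin.mk_one] <;>
    norm_num <;> ring

/-- The residual output `ρ̃₁₃ = {(3/5)x, (3/5)x, (1/5)I₃}` of the Buzek–Hillery
nonlocal optimal cloner has positive semidefinite partial transpose (equivalently, is
separable) iff `‖x‖ ≤ 8/9` and `‖x‖ − x₃² ≤ (4/3)(1 + x₃)`, where `‖x‖ = x₁² + x₂² + x₃²`. -/
theorem nonlocal_residual_separability (x : Fin 3 → ℝ)
    (hx : x 0 ^ 2 + x 1 ^ 2 + x 2 ^ 2 ≤ 1) :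
    (ptranspose ((1/4 : ℂ) • ((1 : Matrix (Fin 2 × Fin 2) (Fin 2 × Fin 2) ℂ)
        + (3/5 : ℂ) • ∑ i : Fin 3, (x i : ℂ) • (pauli i ⊗ₖ 1 + 1 ⊗ₖ pauli i)
        + (1/5 : ℂ) • ∑ j : Fin 3, pauli j ⊗ₖ pauli j))).PosSemidef
    ↔ (x 0 ^ 2 + x 1 ^ 2 + x 2 ^ 2 ≤ 8/9 ∧
       x 0 ^ 2 + x 1 ^ 2 + x 2 ^ 2 - x 2 ^ 2 ≤ (4/3) * (1 + x 2)) := by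
  rw [matrix_eq x, Matrix.posSemidef_submatrix_equiv eq4,
    show ((20:ℂ))⁻¹ = (((20:ℝ)⁻¹ : ℝ) : ℂ) by norm_num,
    smul_psd_iff _ (by norm_num : (0:ℝ) < (20:ℝ)⁻¹)]
  constructor
  · intro h
    constructor
    · have hdet := psd_det_nonneg h
      rw [detP20, Complex.zero_le_real] at hdet
      linarith
    · have h2 := h.dotProduct_mulVec_nonneg ![4, -3*((x 0 : ℂ) - (x 1)*Complex.I), -3*((x 0:ℂ) + (x 1)*Complex.I), 0]
      simp only [P20, dotProduct, Matrix.mulVec, Fin.sum_univ_four, Matrix.cons_val, Matrix.of_apply,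
        Matrix.cons_val_zero, Matrix.cons_val_one, Matrix.head_cons,
        Matrix.empty_val', Matrix.cons_val_fin_one, Matrix.head_fin_const,
        Matrix.cons_val_two, Matrix.cons_val_three, Matrix.tail_cons,
        Pi.star_apply, Complex.star_def] at h2
      rw [Complex.le_def] at h2
      obtain ⟨hre, -⟩ := h2
      simp only [Complex.zero_re, Complex.add_re, Complex.mul_re, Complex.add_im,
        Complex.mul_im, Complex.conj_re, Complex.conj_im, Complex.ofReal_re,
        Complex.ofReal_im, Complex.sub_re, Complex.sub_im, Complex.neg_re, Complex.neg_im,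
        Complex.I_re, Complex.I_im] at hre
      norm_num at hre
      nlinarith [hre]
  · rintro ⟨h1, h2⟩
    refine Matrix.PosSemidef.of_dotProduct_mulVec_nonneg (hermP20 _ _ _) fun v => ?_
    have hk := key (x 0) (x 1) (x 2) (v 0).re (v 0).im (v 1).re (v 1).im
      (v 2).re (v 2).im (v 3).re (v 3).im (by linarith) (by linarith)
    simp only [P20, dotProduct, Matrix.mulVec, Fin.sum_univ_four, Matrix.cons_val, Matrix.of_apply,
      Matrix.cons_val_zero, Matrix.cons_val_one, Matrix.head_cons,
      Matrix.empty_val', Matrix.cons_val_fin_one, Matrix.head_fin_const,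
      Matrix.cons_val_two, Matrix.cons_val_three, Matrix.tail_cons,
      Pi.star_apply, Complex.star_def]
    rw [Complex.le_def]
    constructor
    · simp only [Complex.zero_re, Complex.add_re, Complex.mul_re, Complex.add_im,
        Complex.mul_im, Complex.conj_re, Complex.conj_im, Complex.ofReal_re,
        Complex.ofReal_im, Complex.sub_re, Complex.sub_im, Complex.I_re, Complex.I_im]
      norm_num
      linarith [hk]
    · simp only [Complex.zero_im, Complex.add_re, Complex.mul_re, Complex.add_im,
        Complex.mul_im, Complex.conj_re, Complex.conj_im, Complex.ofReal_re,
        Complex.ofReal_im, Complex.sub_re, Complex.sub_im, Complex.I_re, Complex.I_im]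
      norm_num
      ring
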